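/- arXiv:1105.6367 — 2 statements merged into one kernel-verified Lean document; each statement's English description precedes it below -/
import Mathlib

section
/- Let A be symmetric positive definite with eigenvalues λ₁ ≤ ... ≤ λ_N and set λ = √(λ₁ λ_N). Then the condition number of (A + λ I)^{-1} A equals √(κ(A)), i.e., it equals the condition number of A + λ I. -/
open Matrix
open scoped Matrix.Norms.L2Operator

section Helpers
variable {n : ℕ}

private lemma diag_le' (d : Fin n → ℝ) (M : ℝ) (hM : 0 ≤ M) (h : ∀ i, |d i| ≤ M) :
    ‖(diagonal d : Matrix (Fin n) (Fin n) ℝ)‖ ≤ M := by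
  rw [l2_opNorm_def]
  refine ContinuousLinearMap.opNorm_le_bound _ hM fun x => ?_
  simp only [LinearEquiv.trans_apply, LinearMap.coe_toContinuousLinearMap']
  rw [toEuclideanLin_apply]
  rw [EuclideanSpace.norm_eq, EuclideanSpace.norm_eq]
  rw [← Real.sqrt_sq hM, ← Real.sqrt_mul (by positivity), Finset.mul_sum]
  apply Real.sqrt_le_sqrt
  apply Finset.sum_le_sum
  intro i _
  simp only [mulVec_diagonal, Real.norm_eq_abs, abs_mul, mul_pow]
  have h2 : |(WithLp.equiv 2 (Fin n → ℝ)) x i| = |x i| := rfl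
  exact mul_le_mul_of_nonneg_right (pow_le_pow_left₀ (abs_nonneg _) (h i) 2) (sq_nonneg _)

private lemma diag_ge' (d : Fin n → ℝ) (i : Fin n) :
    |d i| ≤ ‖(diagonal d : Matrix (Fin n) (Fin n) ℝ)‖ := by
  have h := l2_opNorm_mulVec (diagonal d) (EuclideanSpace.single i 1)
  have h1 : ‖(EuclideanSpace.single i (1:ℝ))‖ = 1 := by simp
  have h0 : (diagonal d *ᵥ ((EuclideanSpace.single i 1 : EuclideanSpace ℝ (Fin n)) : Fin n → ℝ))
      = Pi.single i (d i) := by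
    ext j
    rw [mulVec_diagonal]
    rcases eq_or_ne j i with rfl | hj
    · simp [EuclideanSpace.single_apply]
    · simp [EuclideanSpace.single_apply, hj, Pi.single_apply]
  have h2 : ((EuclideanSpace.equiv (Fin n) ℝ).symm <|
      diagonal d *ᵥ (EuclideanSpace.single i 1)) = EuclideanSpace.single i (d i) := by
    rw [h0]; rfl
  rw [h2, h1, mul_one, EuclideanSpace.norm_single] at h
  simpa using h

private lemma diag_norm (d : Fin n → ℝ) (M : ℝ) (hM : 0 ≤ M) (h : ∀ i, |d i| ≤ M)
    (hex : ∃ i, |d i| = M) :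
    ‖(diagonal d : Matrix (Fin n) (Fin n) ℝ)‖ = M := by
  obtain ⟨i, hi⟩ := hex
  exact le_antisymm (diag_le' d M hM h) (hi ▸ diag_ge' d i)

private lemma conj_norm (U D : Matrix (Fin n) (Fin n) ℝ)
    (hU : U ∈ unitary (Matrix (Fin n) (Fin n) ℝ)) : ‖U * D * star U‖ = ‖D‖ := by
  rw [CStarRing.norm_mul_mem_unitary _ (Unitary.star_mem hU), CStarRing.norm_mem_unitary_mul _ hU]

private lemma conjInvAux (U D : Matrix (Fin n) (Fin n) ℝ)
    (hU : U ∈ unitary (Matrix (Fin n) (Fin n) ℝ)) (E : Matrix (Fin n) (Fin n) ℝ)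
    (hDE : D * E = 1) : (U * D * star U)⁻¹ = U * E * star U := by
  apply Matrix.inv_eq_right_inv
  have h1 : star U * U = 1 := hU.1
  calc U * D * star U * (U * E * star U)
      = U * (D * ((star U * U) * (E * star U))) := by simp only [mul_assoc]
    _ = 1 := by rw [h1, one_mul, ← mul_assoc D E, hDE, one_mul, hU.2]

end Helpers

private lemma conj_mul_conj {n : ℕ} (U D E : Matrix (Fin n) (Fin n) ℝ)
    (hU : U ∈ unitary (Matrix (Fin n) (Fin n) ℝ)) :
    (U * D * star U) * (U * E * star U) = U * (D * E) * star U := by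
  have h1 : star U * U = 1 := hU.1
  calc (U * D * star U) * (U * E * star U)
      = U * (D * ((star U * U) * (E * star U))) := by simp only [mul_assoc]
    _ = U * (D * E) * star U := by rw [h1, one_mul, ← mul_assoc D E, ← mul_assoc]


/-- For `A` SPD with extreme eigenvalues `λ₁ ≤ λ_N` and `λ = √(λ₁ λ_N)`,
the spectral condition number of `(A + λI)⁻¹ A` equals `√(κ(A))`, i.e. it equals the
condition number of `A + λI`. -/
theorem stmt3 {N : ℕ} (A : Matrix (Fin N) (Fin N) ℝ) (hA : A.IsHermitian)
    (lam1 lamN : ℝ)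
    (hmin : IsLeast (Set.range hA.eigenvalues) lam1)
    (hmax : IsGreatest (Set.range hA.eigenvalues) lamN)
    (hpd : 0 < lam1) :
    ‖(A + Real.sqrt (lam1 * lamN) • (1 : Matrix (Fin N) (Fin N) ℝ))⁻¹ * A‖ *
        ‖((A + Real.sqrt (lam1 * lamN) • (1 : Matrix (Fin N) (Fin N) ℝ))⁻¹ * A)⁻¹‖ =
      Real.sqrt (lamN / lam1) ∧
    ‖(A + Real.sqrt (lam1 * lamN) • (1 : Matrix (Fin N) (Fin N) ℝ))⁻¹ * A‖ *
        ‖((A + Real.sqrt (lam1 * lamN) • (1 : Matrix (Fin N) (Fin N) ℝ))⁻¹ * A)⁻¹‖ =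
      ‖A + Real.sqrt (lam1 * lamN) • (1 : Matrix (Fin N) (Fin N) ℝ)‖ *
        ‖(A + Real.sqrt (lam1 * lamN) • (1 : Matrix (Fin N) (Fin N) ℝ))⁻¹‖ := by
  obtain ⟨i1, hi1⟩ := hmin.1
  obtain ⟨iN, hiN⟩ := hmax.1
  set d : Fin N → ℝ := hA.eigenvalues with hd
  have hle : ∀ i, lam1 ≤ d i := fun i => hmin.2 ⟨i, rfl⟩
  have hge : ∀ i, d i ≤ lamN := fun i => hmax.2 ⟨i, rfl⟩
  have h1N : lam1 ≤ lamN := hi1 ▸ hge i1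
  have hNpos : 0 < lamN := lt_of_lt_of_le hpd h1N
  set lam : ℝ := Real.sqrt (lam1 * lamN) with hlamdef
  have hlam : 0 < lam := Real.sqrt_pos.mpr (by positivity)
  set U : Matrix (Fin N) (Fin N) ℝ := (hA.eigenvectorUnitary : Matrix (Fin N) (Fin N) ℝ) with hUdef
  have hU : U ∈ unitary (Matrix (Fin N) (Fin N) ℝ) := hA.eigenvectorUnitary.2
  have hspec : A = U * diagonal d * star U := by
    have := hA.spectral_theorem
    rwa [RCLike.ofReal_real_eq_id, Function.id_comp] at this
  have hsmul : (lam • 1 : Matrix (Fin N) (Fin N) ℝ) = diagonal (fun _ => lam) := by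
    ext i j
    rcases eq_or_ne i j with rfl | h
    · simp [diagonal, one_apply]
    · simp [diagonal, one_apply, h]
  have hconj_smul : U * (lam • (1 : Matrix (Fin N) (Fin N) ℝ)) * star U = lam • 1 := by
    rw [mul_smul_comm, mul_one, smul_mul_assoc, hU.2]
  have hdadd : diagonal d + lam • (1 : Matrix (Fin N) (Fin N) ℝ)
      = diagonal (fun i => d i + lam) := by
    rw [hsmul, diagonal_add]
  have hB : A + lam • 1 = U * diagonal (fun i => d i + lam) * star U := by
    rw [← hdadd, mul_add, add_mul, ← hspec, hconj_smul]
  -- positivity of entries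
  have hdpos : ∀ i, 0 < d i := fun i => lt_of_lt_of_le hpd (hle i)
  have hdlpos : ∀ i, 0 < d i + lam := fun i => add_pos (hdpos i) hlam
  have hBinv : (A + lam • 1)⁻¹ = U * diagonal (fun i => (d i + lam)⁻¹) * star U := by
    rw [hB]
    apply conjInvAux _ _ hU
    rw [diagonal_mul_diagonal]
    convert diagonal_one with i
    exact mul_inv_cancel₀ (hdlpos i).ne'
  have hC : (A + lam • 1)⁻¹ * A = U * diagonal (fun i => (d i + lam)⁻¹ * d i) * star U := by
    rw [hBinv, hspec, conj_mul_conj _ _ _ hU, diagonal_mul_diagonal]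
  have hCinv : ((A + lam • 1)⁻¹ * A)⁻¹
      = U * diagonal (fun i => (d i)⁻¹ * (d i + lam)) * star U := by
    rw [hC]
    apply conjInvAux _ _ hU
    rw [diagonal_mul_diagonal]
    convert diagonal_one with i
    field_simp [(hdpos i).ne', (hdlpos i).ne']
  -- norms
  have nB : ‖A + lam • 1‖ = lamN + lam := by
    rw [hB, conj_norm _ _ hU]
    refine diag_norm _ _ (add_pos hNpos hlam).le (fun i => ?_) ⟨iN, ?_⟩
    · rw [abs_of_pos (hdlpos i)]
      exact add_le_add_left (hge i) lam
    · rw [abs_of_pos (hdlpos iN), hiN]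
  have nBi : ‖(A + lam • 1)⁻¹‖ = (lam1 + lam)⁻¹ := by
    rw [hBinv, conj_norm _ _ hU]
    refine diag_norm _ _ (inv_pos.mpr (add_pos hpd hlam)).le (fun i => ?_) ⟨i1, ?_⟩
    · rw [abs_of_pos (inv_pos.mpr (hdlpos i))]
      exact inv_anti₀ (add_pos hpd hlam) (add_le_add_left (hle i) lam)
    · rw [abs_of_pos (inv_pos.mpr (hdlpos i1)), hi1]
  have nC : ‖(A + lam • 1)⁻¹ * A‖ = (lamN + lam)⁻¹ * lamN := by
    rw [hC, conj_norm _ _ hU]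
    refine diag_norm _ _ (mul_nonneg (inv_pos.mpr (add_pos hNpos hlam)).le hNpos.le)
      (fun i => ?_) ⟨iN, ?_⟩
    · rw [abs_of_pos (mul_pos (inv_pos.mpr (hdlpos i)) (hdpos i)), inv_mul_eq_div,
        inv_mul_eq_div, div_le_div_iff₀ (hdlpos i) (add_pos hNpos hlam)]
      nlinarith [hge i, hlam.le]
    · rw [abs_of_pos (mul_pos (inv_pos.mpr (hdlpos iN)) (hdpos iN)), hiN]
  have nCi : ‖((A + lam • 1)⁻¹ * A)⁻¹‖ = lam1⁻¹ * (lam1 + lam) := by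
    rw [hCinv, conj_norm _ _ hU]
    refine diag_norm _ _ (mul_nonneg (inv_pos.mpr hpd).le (add_pos hpd hlam).le)
      (fun i => ?_) ⟨i1, ?_⟩
    · rw [abs_of_pos (mul_pos (inv_pos.mpr (hdpos i)) (hdlpos i)), inv_mul_eq_div,
        inv_mul_eq_div, div_le_div_iff₀ (hdpos i) hpd]
      nlinarith [hle i, hlam.le]
    · rw [abs_of_pos (mul_pos (inv_pos.mpr (hdpos i1)) (hdlpos i1)), hi1]
  -- arithmetic
  set a := Real.sqrt lam1 with hadef
  set b := Real.sqrt lamN with hbdef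
  have ha2 : a ^ 2 = lam1 := Real.sq_sqrt hpd.le
  have hb2 : b ^ 2 = lamN := Real.sq_sqrt hNpos.le
  have ha0 : 0 < a := Real.sqrt_pos.mpr hpd
  have hb0 : 0 < b := Real.sqrt_pos.mpr hNpos
  have hlamab : lam = a * b := Real.sqrt_mul hpd.le lamN
  have hsq : Real.sqrt (lamN / lam1) = b / a := Real.sqrt_div hNpos.le lam1
  constructor
  · rw [nC, nCi, hsq, ← ha2, ← hb2, hlamab]
    field_simp
    ring
  · rw [nC, nCi, nB, nBi, ← ha2, ← hb2, hlamab]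
    field_simp
    ring
end

section
/- Let the Arnoldi relation A V_m = V_m H_m + h_{m+1,m} v_{m+1} e_m^T hold with V_m having orthonormal columns, v_{m+1} a unit vector orthogonal to the columns of V_m, and H_m upper Hessenberg with positive subdiagonal entries h_{i+1,i}. Let q_m(z) = det(zI − H_m) be the characteristic polynomial of H_m. Then ‖q_m(A) v₁‖ = ∏_{i=1}^m h_{i+1,i}. -/
open Matrix

private lemma vecMulVec_mulVec' {m k : Type*} [Fintype k] (w : m → ℝ) (v x : k → ℝ) :
    (Matrix.vecMulVec w v).mulVec x = (v ⬝ᵥ x) • w := by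
  ext i
  simp [Matrix.vecMulVec, Matrix.mulVec, dotProduct, Finset.mul_sum, mul_assoc,
    mul_comm, mul_left_comm]

private lemma sum_mulVec' {m k : Type*} [Fintype k] {ι : Type*} (s : Finset ι)
    (f : ι → Matrix m k ℝ) (x : k → ℝ) :
    (∑ i ∈ s, f i).mulVec x = ∑ i ∈ s, (f i).mulVec x := by
  ext j
  simp only [Matrix.mulVec, dotProduct, Finset.sum_apply, Matrix.sum_apply,
    Finset.sum_mul]
  exact Finset.sum_comm

/-- under the Arnoldi relation `A V = V H + h v₊ e_mᵀ` (with `V`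
having orthonormal columns, `v₊` a unit vector orthogonal to them, `H` upper
Hessenberg with positive subdiagonal entries), the characteristic polynomial
`q_m` of `H` satisfies `‖q_m(A) v₁‖ = ∏_{i=1}^m h_{i+1,i}` (the product including
the scalar `h = h_{m+1,m}`). -/
theorem stmt8 {N n : ℕ} (A : Matrix (Fin N) (Fin N) ℝ)
    (V : Matrix (Fin N) (Fin (n + 1)) ℝ) (Hm : Matrix (Fin (n + 1)) (Fin (n + 1)) ℝ)
    (vnext : Fin N → ℝ) (h : ℝ)
    (horth : Vᵀ * V = 1)
    (hvnorm : vnext ⬝ᵥ vnext = 1)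
    (hvorth : Vᵀ.mulVec vnext = 0)
    (hHess : ∀ i j : Fin (n + 1), (j : ℕ) + 1 < (i : ℕ) → Hm i j = 0)
    (hsub : ∀ i : Fin n, 0 < Hm i.succ i.castSucc) (hpos : 0 < h)
    (harnoldi : A * V = V * Hm + h • Matrix.vecMulVec vnext (Pi.single (Fin.last n) 1)) :
    ‖(WithLp.equiv 2 (Fin N → ℝ)).symm
        ((Polynomial.aeval A Hm.charpoly).mulVec (fun i => V i 0))‖ =
      (∏ i : Fin n, Hm i.succ i.castSucc) * h := by
  classical
  set f : ℕ → ℝ := fun i => if hi : i < n then Hm ⟨i + 1, by omega⟩ ⟨i, by omega⟩ else 0 with hf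
  -- entries of powers below subdiagonal band vanish
  have hzero : ∀ k : ℕ, ∀ i : Fin (n + 1), k < (i : ℕ) → (Hm ^ k) i 0 = 0 := by
    intro k
    induction k with
    | zero =>
      intro i hi
      simp only [pow_zero]
      rw [Matrix.one_apply_ne]
      exact fun e => by simp [e] at hi
    | succ k ih =>
      intro i hi
      rw [pow_succ']
      rw [Matrix.mul_apply]
      apply Finset.sum_eq_zero
      intro j _
      by_cases hj : (j : ℕ) + 1 < (i : ℕ)
      · rw [hHess i j hj, zero_mul]
      · rw [ih j (by omega), mul_zero]
  -- value on the subdiagonal path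
  have hprod : ∀ k : ℕ, (hk : k ≤ n) → (Hm ^ k) ⟨k, by omega⟩ 0 = ∏ i ∈ Finset.range k, f i := by
    intro k
    induction k with
    | zero => intro _; simp [Matrix.one_apply]
    | succ k ih =>
      intro hk
      rw [pow_succ', Matrix.mul_apply, Finset.sum_eq_single (⟨k, by omega⟩ : Fin (n + 1))]
      · rw [ih (by omega), Finset.prod_range_succ, mul_comm]
        congr 1
        simp only [hf]
        rw [dif_pos (by omega)]
      · intro j _ hj
        by_cases hjk : (j : ℕ) + 1 < k + 1
        · rw [hHess ⟨k + 1, by omega⟩ j hjk, zero_mul]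
        · have : k < (j : ℕ) := by
            rcases Nat.lt_or_ge k (j : ℕ) with h' | h'
            · exact h'
            · exfalso; apply hj; ext; simp; omega
          rw [hzero k j this, mul_zero]
      · intro habs; exact absurd (Finset.mem_univ _) habs
  -- the basic Arnoldi step on vectors
  have hstep : ∀ x : Fin (n + 1) → ℝ,
      A.mulVec (V.mulVec x) = V.mulVec (Hm.mulVec x) + (h * x (Fin.last n)) • vnext := by
    intro x
    rw [Matrix.mulVec_mulVec, harnoldi, Matrix.add_mulVec, ← Matrix.mulVec_mulVec,
      Matrix.smul_mulVec, vecMulVec_mulVec']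
    congr 1
    rw [smul_smul]
    congr 1
    simp [dotProduct, Pi.single_apply]
  set e1 : Fin (n + 1) → ℝ := Pi.single 0 1 with he1
  have hv1 : (fun i => V i 0) = V.mulVec e1 := by
    ext i
    simp [Matrix.mulVec, he1, dotProduct, Pi.single_apply]
  have he1last : ∀ k : ℕ, (Hm ^ k).mulVec e1 (Fin.last n) = (Hm ^ k) (Fin.last n) 0 := by
    intro k
    simp [Matrix.mulVec, he1, dotProduct, Pi.single_apply]
  -- powers up to n stay in the Krylov space
  have hpow : ∀ k : ℕ, k ≤ n →
      (A ^ k).mulVec (V.mulVec e1) = V.mulVec ((Hm ^ k).mulVec e1) := by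
    intro k
    induction k with
    | zero => intro _; simp
    | succ k ih =>
      intro hk
      rw [pow_succ', ← Matrix.mulVec_mulVec, ih (by omega), hstep]
      have : ((Hm ^ k).mulVec e1) (Fin.last n) = 0 := by
        rw [he1last]
        exact hzero k (Fin.last n) (by simp [Fin.last]; omega)
      rw [this, mul_zero, zero_smul, add_zero, Matrix.mulVec_mulVec e1 Hm (Hm ^ k),
        ← pow_succ']
  -- the (n+1)-st power
  have hc : (Hm ^ n) (Fin.last n) 0 = ∏ i ∈ Finset.range n, f i := by
    have := hprod n le_rfl
    convert this using 2
    rfl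
  have hpow1 : (A ^ (n + 1)).mulVec (V.mulVec e1) =
      V.mulVec ((Hm ^ (n + 1)).mulVec e1) + (h * ∏ i ∈ Finset.range n, f i) • vnext := by
    rw [pow_succ', ← Matrix.mulVec_mulVec, hpow n le_rfl, hstep, he1last, hc,
      Matrix.mulVec_mulVec e1 Hm (Hm ^ n), ← pow_succ']
  -- assemble the characteristic polynomial
  have hdeg : Hm.charpoly.natDegree = n + 1 := by
    rw [Matrix.charpoly_natDegree_eq_dim]; simp
  have hmonic : Hm.charpoly.Monic := Matrix.charpoly_monic Hm
  have haevalA : (Polynomial.aeval A Hm.charpoly) =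
      ∑ i ∈ Finset.range (n + 2), Hm.charpoly.coeff i • A ^ i := by
    rw [Polynomial.aeval_eq_sum_range, hdeg]
  have haevalH : (∑ i ∈ Finset.range (n + 2), Hm.charpoly.coeff i • Hm ^ i) = 0 := by
    have h2 := Polynomial.aeval_eq_sum_range (p := Hm.charpoly) Hm
    rw [hdeg] at h2
    rw [← h2, Matrix.aeval_self_charpoly]
  have key : (Polynomial.aeval A Hm.charpoly).mulVec (fun i => V i 0) =
      (h * ∏ i ∈ Finset.range n, f i) • vnext := by
    rw [hv1, haevalA, sum_mulVec']
    have hsplit : ∀ i ∈ Finset.range (n + 2),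
        (Hm.charpoly.coeff i • A ^ i).mulVec (V.mulVec e1) =
        V.mulVec ((Hm.charpoly.coeff i • Hm ^ i).mulVec e1) +
          (if i = n + 1 then (h * ∏ j ∈ Finset.range n, f j) • vnext else 0) := by
      intro i hi
      rw [Matrix.smul_mulVec, Matrix.smul_mulVec]
      by_cases hi1 : i = n + 1
      · subst hi1
        rw [if_pos rfl, hpow1]
        have hlead : Hm.charpoly.coeff (n + 1) = 1 := by
          have := hmonic.coeff_natDegree
          rwa [hdeg] at this
        rw [hlead, one_smul, one_smul]
      · rw [if_neg hi1, add_zero, hpow i (by simp at hi; omega), Matrix.mulVec_smul]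
    rw [Finset.sum_congr rfl hsplit, Finset.sum_add_distrib, Finset.sum_ite_eq'
      (Finset.range (n + 2)) (n + 1), if_pos (by simp)]
    have hsum0 : (∑ x ∈ Finset.range (n + 2), (Hm.charpoly.coeff x • Hm ^ x).mulVec e1) = 0 := by
      rw [← sum_mulVec', haevalH, Matrix.zero_mulVec]
    have hpull : (∑ x ∈ Finset.range (n + 2),
        V.mulVec ((Hm.charpoly.coeff x • Hm ^ x).mulVec e1)) = 0 := by
      calc (∑ x ∈ Finset.range (n + 2), V.mulVec ((Hm.charpoly.coeff x • Hm ^ x).mulVec e1))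
          = V.mulVec (∑ x ∈ Finset.range (n + 2), (Hm.charpoly.coeff x • Hm ^ x).mulVec e1) := by
            simp only [← Matrix.mulVecLin_apply]
            exact (map_sum V.mulVecLin _ _).symm
        _ = 0 := by rw [hsum0, Matrix.mulVec_zero]
    rw [hpull, zero_add]
  rw [key]
  -- now the norm computation
  have hfprod : (∏ i ∈ Finset.range n, f i) = ∏ i : Fin n, Hm i.succ i.castSucc := by
    rw [← Fin.prod_univ_eq_prod_range]
    apply Finset.prod_congr rfl
    intro i _
    simp only [hf]
    rw [dif_pos i.isLt]
    congr 1 <;> ext <;> simp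
  have hfpos : 0 ≤ ∏ i ∈ Finset.range n, f i := by
    rw [hfprod]
    exact Finset.prod_nonneg fun i _ => (hsub i).le
  rw [EuclideanSpace.norm_eq]
  have : ∀ i : Fin N,
      ‖(WithLp.equiv 2 (Fin N → ℝ)).symm ((h * ∏ i ∈ Finset.range n, f i) • vnext) i‖ ^ 2 =
      (h * ∏ i ∈ Finset.range n, f i) ^ 2 * (vnext i * vnext i) := by
    intro i
    rw [WithLp.equiv_symm_apply, PiLp.toLp_apply]
    simp only [Pi.smul_apply, smul_eq_mul, Real.norm_eq_abs, sq_abs]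
    ring
  rw [Finset.sum_congr rfl fun i _ => this i, ← Finset.mul_sum]
  have hvn : (∑ i : Fin N, vnext i * vnext i) = 1 := hvnorm
  rw [hvn, mul_one, Real.sqrt_sq_eq_abs, abs_of_nonneg (by positivity), hfprod, mul_comm]
end
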